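/- Let μ, Ω, b, σ be real numbers with μ ≠ 0. The purely imaginary number λ = iσ is a root of the viscous characteristic polynomial (λ² + 10μλ + 4b − 2Ω²)² + 4Ω²λ² if and only if σ = 0 and Ω² = 2b. In particular, for any nonzero viscosity μ the marginal stability condition is Ω² = 2b, independently of the magnitude of μ. -/
import Mathlib


/-- Marginal stability of the viscous Maclaurin spheroid: for `μ ≠ 0`, the purely
imaginary number `λ = iσ` is a root of `(λ² + 10μλ + 4b − 2Ω²)² + 4Ω²λ²` iff
`σ = 0` and `Ω² = 2b`; the marginal stability condition `Ω² = 2b` is independent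
of the magnitude of the viscosity `μ`. -/
theorem maclaurin_viscous_marginal_stability (μ Ω b σ : ℝ) (hμ : μ ≠ 0) :
    ((Complex.I * σ) ^ 2 + 10 * (μ : ℂ) * (Complex.I * σ) + 4 * (b : ℂ)
        - 2 * (Ω : ℂ) ^ 2) ^ 2 + 4 * (Ω : ℂ) ^ 2 * (Complex.I * σ) ^ 2 = 0 ↔
    σ = 0 ∧ Ω ^ 2 = 2 * b := by
  have key : ((Complex.I * σ) ^ 2 + 10 * (μ : ℂ) * (Complex.I * σ) + 4 * (b : ℂ)
        - 2 * (Ω : ℂ) ^ 2) ^ 2 + 4 * (Ω : ℂ) ^ 2 * (Complex.I * σ) ^ 2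
      = (((4 * b - 2 * Ω ^ 2 - σ ^ 2) ^ 2 - (10 * μ * σ) ^ 2 - 4 * Ω ^ 2 * σ ^ 2 : ℝ) : ℂ)
        + ((2 * (4 * b - 2 * Ω ^ 2 - σ ^ 2) * (10 * μ * σ) : ℝ) : ℂ) * Complex.I := by
    push_cast
    linear_combination (20*Complex.I*(σ:ℂ)^3*(μ:ℂ) + (σ:ℂ)^4*(Complex.I^2-1) + 100*(μ:ℂ)^2*(σ:ℂ)^2 + 8*(b:ℂ)*(σ:ℂ)^2) * Complex.I_sq
  rw [key]
  rw [Complex.ext_iff]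
  simp only [Complex.add_re, Complex.add_im, Complex.ofReal_re, Complex.ofReal_im,
    Complex.mul_I_re, Complex.mul_I_im, Complex.zero_re, Complex.zero_im]
  constructor
  · rintro ⟨h1, h2⟩
    simp only [zero_add, add_zero] at h1 h2
    have hσ : σ = 0 := by
      by_contra hσ
      have hA : 4 * b - 2 * Ω ^ 2 - σ ^ 2 = 0 := by
        rcases mul_eq_zero.mp (by nlinarith : (4 * b - 2 * Ω ^ 2 - σ ^ 2) * (μ * σ) = 0) with h | h
        · exact h
        · rcases mul_eq_zero.mp h with h | h
          · exact absurd h hμ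
          · exact absurd h hσ
      nlinarith [sq_nonneg σ, sq_nonneg μ, mul_pos (mul_pos (by norm_num : (0:ℝ) < 100) (sq_pos_of_ne_zero hμ)) (sq_pos_of_ne_zero hσ)]
    refine ⟨hσ, ?_⟩
    subst hσ
    nlinarith [h1]
  · rintro ⟨hσ, hb⟩
    subst hσ
    refine ⟨?_, ?_⟩
    · simp
      nlinarith
    · simp
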